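/- Let q, r be natural numbers, a : Fin (q+1) → (Fin r → ℤ), and let the torus T = (Fin r → ℂˣ) act on ℂ^{q+1} by (t • z) j = (∏ i, (t i : ℂ) ^ (−(a j i))) * z j, with moment map μ(z) i = (∑ j, ‖z j‖² * (a j i)) / (∑ j, ‖z j‖²). Then for every nonzero v ∈ ℂ^{q+1} the following are equivalent: (i) 0 does not lie in the Euclidean closure of the orbit { t • v : t ∈ T } (i.e., v is a semistable point for the linearized torus action on ℙ^q); (ii) there exists a nonzero w in the Euclidean closure of { c • (t • v) : c ∈ ℂˣ, t ∈ T } (the affine cone over the orbit closure of [v] in ℙ^q) with μ(w) = 0. (Kempf–Ness-type characterization of semistability by the moment map, for diagonal torus actions over ℂ.) -/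

import Mathlib

private lemma exp_zpow' (s : ℝ) (m : ℤ) : Real.exp s ^ m = Real.exp (m * s) := by
  rw [← Real.rpow_intCast, ← Real.exp_mul, mul_comm]

private lemma exp_sq' (x : ℝ) : Real.exp x ^ 2 = Real.exp (2 * x) := by
  rw [sq, ← Real.exp_add]; ring_nf

/-- **Kempf–Ness-type characterization of semistability by the moment map**
(for diagonal torus actions over `ℂ`).

For the torus `T = (Fin r → ℂˣ)` acting on `ℂ^{q+1}` with weights `a j`, a
nonzero vector `v` is semistable (i.e. `0` is not in the closure of its
`T`-orbit) if and only if the zero level set of the moment map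
`μ w i = (∑ j, ‖w j‖² * a j i) / (∑ j, ‖w j‖²)` meets the affine cone over the
orbit closure of `[v]` away from the origin. -/
theorem semistable_iff_momentMap_zero (q r : ℕ) (a : Fin (q + 1) → Fin r → ℤ)
    (v : Fin (q + 1) → ℂ) (hv : v ≠ 0) :
    ((0 : Fin (q + 1) → ℂ) ∉ closure {z : Fin (q + 1) → ℂ |
        ∃ t : Fin r → ℂˣ, z = fun j => (∏ i, (t i : ℂ) ^ (-(a j i))) * v j})
      ↔ ∃ w ∈ closure {z : Fin (q + 1) → ℂ | ∃ (c : ℂˣ) (t : Fin r → ℂˣ),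
            z = fun j => (c : ℂ) * ((∏ i, (t i : ℂ) ^ (-(a j i))) * v j)},
          w ≠ 0 ∧ ∀ i : Fin r,
            (∑ j, ‖w j‖ ^ 2 * (a j i : ℝ)) / (∑ j, ‖w j‖ ^ 2) = 0 := by
  set O : Set (Fin (q + 1) → ℂ) := {z : Fin (q + 1) → ℂ |
      ∃ t : Fin r → ℂˣ, z = fun j => (∏ i, (t i : ℂ) ^ (-(a j i))) * v j} with hOdef
  set O' : Set (Fin (q + 1) → ℂ) := {z : Fin (q + 1) → ℂ | ∃ (c : ℂˣ) (t : Fin r → ℂˣ),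
      z = fun j => (c : ℂ) * ((∏ i, (t i : ℂ) ^ (-(a j i))) * v j)} with hO'def
  set N : (Fin (q + 1) → ℂ) → ℝ := fun z => ∑ j, ‖z j‖ ^ 2 with hNdef
  have hNc : Continuous N := by
    apply continuous_finset_sum
    intro j _
    exact ((continuous_apply j).norm.pow 2)
  constructor
  · -- semistable → minimizer w with μ(w) = 0
    intro h0
    have hvO : v ∈ O := by
      refine ⟨1, ?_⟩
      funext j
      simp
    -- invariance of closure O under the torus
    have hCinv : ∀ t : Fin r → ℂˣ, ∀ z ∈ closure O,
        (fun j => (∏ i, (t i : ℂ) ^ (-(a j i))) * z j) ∈ closure O := by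
      intro t z hz
      have hcont : Continuous (fun z : Fin (q + 1) → ℂ =>
          fun j => (∏ i, (t i : ℂ) ^ (-(a j i))) * z j) :=
        continuous_pi fun j => continuous_const.mul (continuous_apply j)
      refine map_mem_closure hcont hz ?_
      rintro x ⟨s, rfl⟩
      refine ⟨fun i => t i * s i, ?_⟩
      funext j
      simp only [Units.val_mul, mul_zpow, Finset.prod_mul_distrib]
      ring
    -- existence of a norm minimizer on closure O
    have hKsub : closure O ∩ {z | N z ≤ N v} ⊆ Metric.closedBall 0 (Real.sqrt (N v)) := by
      rintro z ⟨-, hz⟩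
      rw [Metric.mem_closedBall, dist_zero_right]
      rw [pi_norm_le_iff_of_nonneg (Real.sqrt_nonneg _)]
      intro j
      rw [show ‖z j‖ = Real.sqrt (‖z j‖ ^ 2) by
        rw [Real.sqrt_sq (norm_nonneg _)]]
      apply Real.sqrt_le_sqrt
      refine le_trans ?_ hz
      exact Finset.single_le_sum (fun j _ => sq_nonneg ‖z j‖) (Finset.mem_univ j)
    have hKcl : IsClosed (closure O ∩ {z | N z ≤ N v}) :=
      isClosed_closure.inter (isClosed_le hNc continuous_const)
    have hKc : IsCompact (closure O ∩ {z | N z ≤ N v}) :=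
      (isCompact_closedBall 0 (Real.sqrt (N v))).of_isClosed_subset hKcl hKsub
    have hvK : v ∈ closure O ∩ {z | N z ≤ N v} := ⟨subset_closure hvO, by simp only [Set.mem_setOf_eq, le_refl]⟩
    obtain ⟨w, hwK, hwmin⟩ := hKc.exists_isMinOn ⟨v, hvK⟩ hNc.continuousOn
    have hmin : ∀ z ∈ closure O, N w ≤ N z := by
      intro z hz
      by_cases h : N z ≤ N v
      · exact hwmin ⟨hz, h⟩
      · exact le_trans (hwmin hvK) (le_of_not_ge h)
    have hwC : w ∈ closure O := hwK.1
    have hw0 : w ≠ 0 := fun h => h0 (h ▸ hwC)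
    refine ⟨w, ?_, hw0, ?_⟩
    · refine closure_mono ?_ hwC
      rintro x ⟨s, rfl⟩
      exact ⟨1, s, by funext j; simp⟩
    · intro i
      suffices hnum : ∑ j, ‖w j‖ ^ 2 * (a j i : ℝ) = 0 by rw [hnum, zero_div]
      -- one-parameter subgroup in the i-th direction
      set ts : ℝ → (Fin r → ℂˣ) := fun s i' =>
        if i' = i then Units.mk0 ((Real.exp s : ℝ) : ℂ)
          (by exact_mod_cast (Real.exp_pos s).ne') else 1 with htsdef
      have hprod : ∀ s : ℝ, ∀ j, (∏ i', ((ts s i' : ℂˣ) : ℂ) ^ (-(a j i'))) =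
          ((Real.exp s : ℝ) : ℂ) ^ (-(a j i)) := by
        intro s j
        rw [Finset.prod_eq_single i]
        · simp [htsdef]
        · intro i' _ hne
          simp [htsdef, hne]
        · simp
      set g : ℝ → ℝ := fun s => ∑ j, Real.exp ((-2 * (a j i : ℝ)) * s) * ‖w j‖ ^ 2 with hgdef
      have hg : ∀ s : ℝ, g s = N (fun j => (∏ i', ((ts s i' : ℂˣ) : ℂ) ^ (-(a j i'))) * w j) := by
        intro s
        simp only [hgdef, hNdef]
        refine Finset.sum_congr rfl fun j _ => ?_
        rw [hprod s j, norm_mul, norm_zpow, mul_pow, Complex.norm_real, Real.norm_eq_abs, Real.abs_exp,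
          exp_zpow', exp_sq']
        push_cast
        ring_nf
      have hglb : ∀ s : ℝ, g 0 ≤ g s := by
        intro s
        have h1 : g 0 = N w := by
          simp [hgdef, hNdef]
        rw [h1, hg s]
        exact hmin _ (hCinv (ts s) w hwC)
      have hlm : IsLocalMin g 0 := Filter.Eventually.of_forall hglb
      have hderiv : HasDerivAt g (∑ j, (-2 * (a j i : ℝ)) * ‖w j‖ ^ 2) 0 := by
        apply HasDerivAt.fun_sum
        intro j _
        have h1 : HasDerivAt (fun s : ℝ => (-2 * (a j i : ℝ)) * s) (-2 * (a j i : ℝ)) 0 := by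
          simpa using (hasDerivAt_id (0 : ℝ)).const_mul (-2 * (a j i : ℝ))
        simpa using (h1.exp).mul_const (‖w j‖ ^ 2)
      have hz := hlm.hasDerivAt_eq_zero hderiv
      have h2 : (-2 : ℝ) * ∑ j, ‖w j‖ ^ 2 * (a j i : ℝ) = 0 := by
        rw [Finset.mul_sum, ← hz]
        exact Finset.sum_congr rfl fun j _ => by ring
      linarith
  · -- converse
    rintro ⟨w, hw, hw0, hμ⟩ h0in
    -- support of w is contained in support of v
    have hsupp : ∀ j, v j = 0 → w j = 0 := by
      intro j hj
      have hcl : IsClosed {z : Fin (q + 1) → ℂ | z j = 0} :=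
        isClosed_eq (continuous_apply j) continuous_const
      have : O' ⊆ {z : Fin (q + 1) → ℂ | z j = 0} := by
        rintro x ⟨c, t, rfl⟩
        simp [hj]
      exact hcl.closure_subset_iff.mpr this hw
    obtain ⟨j0, hj0⟩ : ∃ j, w j ≠ 0 := Function.ne_iff.mp hw0
    have hdenpos : 0 < ∑ j, ‖w j‖ ^ 2 := by
      apply Finset.sum_pos' (fun j _ => sq_nonneg _)
      exact ⟨j0, Finset.mem_univ _, pow_pos (norm_pos_iff.mpr hj0) 2⟩
    have hnum : ∀ i, ∑ j, ‖w j‖ ^ 2 * (a j i : ℝ) = 0 := by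
      intro i
      rcases div_eq_zero_iff.mp (hμ i) with h | h
      · exact h
      · exact absurd h hdenpos.ne'
    -- small ε
    set ε : ℝ := Finset.univ.inf' Finset.univ_nonempty
      (fun j : Fin (q + 1) => if v j = 0 then 1 else ‖v j‖) with hεdef
    have hεpos : 0 < ε := by
      rw [hεdef, Finset.lt_inf'_iff]
      intro j _
      by_cases h : v j = 0 <;> simp [h, norm_pos_iff]
    obtain ⟨z, hzO, hzd⟩ := Metric.mem_closure_iff.mp h0in ε hεpos
    obtain ⟨t, rfl⟩ := hzO
    set x : Fin r → ℝ := fun i => Real.log ‖((t i : ℂˣ) : ℂ)‖ with hxdef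
    have htpos : ∀ i, 0 < ‖((t i : ℂˣ) : ℂ)‖ := fun i =>
      norm_pos_iff.mpr (Units.ne_zero (t i))
    have hkey : ∀ j, v j ≠ 0 → 0 < ∑ i, (a j i : ℝ) * x i := by
      intro j hvj
      have h1 : ‖(∏ i, ((t i : ℂˣ) : ℂ) ^ (-(a j i))) * v j‖ < ε := by
        calc ‖(∏ i, ((t i : ℂˣ) : ℂ) ^ (-(a j i))) * v j‖
            ≤ ‖fun j => (∏ i, ((t i : ℂˣ) : ℂ) ^ (-(a j i))) * v j‖ :=
              norm_le_pi_norm (fun j => (∏ i, ((t i : ℂˣ) : ℂ) ^ (-(a j i))) * v j) j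
          _ < ε := by
              rwa [dist_eq_norm, zero_sub, norm_neg] at hzd
      have h2 : ε ≤ ‖v j‖ := by
        refine le_trans (Finset.inf'_le _ (Finset.mem_univ j)) ?_
        simp [hvj]
      have h3 : ‖∏ i, ((t i : ℂˣ) : ℂ) ^ (-(a j i))‖ =
          Real.exp (∑ i, (-(a j i) : ℝ) * x i) := by
        rw [norm_prod, Real.exp_sum]
        refine Finset.prod_congr rfl fun i _ => ?_
        rw [norm_zpow]
        conv_lhs => rw [← Real.exp_log (htpos i)]
        rw [exp_zpow']
        congr 1
        push_cast
        ring
      have h4 : Real.exp (∑ i, (-(a j i) : ℝ) * x i) * ‖v j‖ < ‖v j‖ := by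
        rw [← h3, ← norm_mul]
        exact lt_of_lt_of_le h1 h2
      have h5 : Real.exp (∑ i, (-(a j i) : ℝ) * x i) < 1 :=
        (mul_lt_iff_lt_one_left (norm_pos_iff.mpr hvj)).mp h4
      have h6 : ∑ i, (-(a j i) : ℝ) * x i < 0 := Real.exp_lt_one_iff.mp h5
      have h7 : ∑ i, (-(a j i) : ℝ) * x i = -∑ i, (a j i : ℝ) * x i := by
        rw [← Finset.sum_neg_distrib]
        exact Finset.sum_congr rfl fun i _ => by push_cast; ring
      linarith [h7 ▸ h6]
    -- contradiction with moment map zero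
    have hS0 : ∑ j, ‖w j‖ ^ 2 * (∑ i, (a j i : ℝ) * x i) = 0 := by
      have : ∑ j, ‖w j‖ ^ 2 * (∑ i, (a j i : ℝ) * x i)
          = ∑ i, (∑ j, ‖w j‖ ^ 2 * (a j i : ℝ)) * x i := by
        simp_rw [Finset.mul_sum, Finset.sum_mul]
        rw [Finset.sum_comm]
        exact Finset.sum_congr rfl fun i _ => Finset.sum_congr rfl fun j _ => by ring
      rw [this]
      exact Finset.sum_eq_zero fun i _ => by rw [hnum i, zero_mul]
    have hSpos : 0 < ∑ j, ‖w j‖ ^ 2 * (∑ i, (a j i : ℝ) * x i) := by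
      apply Finset.sum_pos'
      · intro j _
        by_cases hwj : w j = 0
        · simp [hwj]
        · have hvj : v j ≠ 0 := fun h => hwj (hsupp j h)
          exact le_of_lt (mul_pos (pow_pos (norm_pos_iff.mpr hwj) 2) (hkey j hvj))
      · refine ⟨j0, Finset.mem_univ _, ?_⟩
        have hvj : v j0 ≠ 0 := fun h => hj0 (hsupp j0 h)
        exact mul_pos (pow_pos (norm_pos_iff.mpr hj0) 2) (hkey j0 hvj)
    linarith
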